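/- Let n ≥ 2 and let p_1(z),...,p_m(z) be homogeneous polynomials of degree d ≥ 1 in z = (z_1,...,z_n) ∈ ℂⁿ that are linearly independent in ℂ[z]. Let S be the complex vector space of homogeneous polynomials r(z) of degree d−1 for which there exists a complex m×n matrix Q such that the polynomial identity p(z)Q = r(z)z holds (i.e. Σ_{j=1}^m p_j(z) Q_{jν} = r(z) z_ν for ν = 1,...,n). If for some integer k with 0 ≤ k ≤ n−1 one has m < Σ_{j=0}^{k} (n−j), then dim_ℂ S ≤ k. -/

import Mathlib

open MvPolynomial

section Aux

/-- Key combinatorial fact about finsupps. -/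
lemma aux_key {σ : Type*} [DecidableEq σ] {a b : σ →₀ ℕ} (hab : a ≠ b) {ν1 ν1' ν2 ν2' : σ}
    (h1 : a + Finsupp.single ν1 1 = b + Finsupp.single ν1' 1)
    (h2 : a + Finsupp.single ν2 1 = b + Finsupp.single ν2' 1) :
    ν1 = ν2 := by
  have hν1 : ν1 ≠ ν1' := by
    rintro rfl
    exact hab (add_right_cancel h1)
  have h0 : (a + Finsupp.single ν1 1) + Finsupp.single ν2' 1
      = (a + Finsupp.single ν2 1) + Finsupp.single ν1' 1 := by
    rw [h1, h2, add_right_comm]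
  have h3 : Finsupp.single ν1 1 + Finsupp.single ν2' 1
      = Finsupp.single ν2 1 + Finsupp.single ν1' 1 := by
    rwa [add_assoc, add_assoc, add_right_inj] at h0
  by_contra hne
  have h4 := DFunLike.congr_fun h3 ν1
  rw [Finsupp.add_apply, Finsupp.add_apply, Finsupp.single_eq_same,
    Finsupp.single_eq_of_ne' (Ne.symm hne), Finsupp.single_eq_of_ne' (Ne.symm hν1)] at h4
  simp at h4

/-- Counting lemma: for injectively chosen monomials `μ i`, the set of shifted
monomials `μ i + e ν` has at least `∑_{j < |s|} (n - j)` elements. -/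
lemma aux_count {ι : Type*} [DecidableEq ι] {n : ℕ} (μ : ι → (Fin n →₀ ℕ)) (s : Finset ι)
    (hinj : Set.InjOn μ s) :
    ∑ j ∈ Finset.range s.card, (n - j) ≤
      ((s ×ˢ (Finset.univ : Finset (Fin n))).image
        (fun x => μ x.1 + Finsupp.single x.2 1)).card := by
  classical
  induction s using Finset.cons_induction with
  | empty => simp
  | cons a s' ha ih =>
    have hinj' : Set.InjOn μ s' := hinj.mono (by simp [Finset.coe_cons, Set.subset_insert])
    set A : Finset (Fin n →₀ ℕ) :=
      Finset.univ.image (fun ν : Fin n => μ a + Finsupp.single ν 1) with hA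
    set B' : Finset (Fin n →₀ ℕ) := ((s' ×ˢ (Finset.univ : Finset (Fin n))).image
        (fun x => μ x.1 + Finsupp.single x.2 1)) with hB'
    have hunion : (((Finset.cons a s' ha) ×ˢ (Finset.univ : Finset (Fin n))).image
        (fun x => μ x.1 + Finsupp.single x.2 1)) = A ∪ B' := by
      ext x
      simp only [hA, hB', Finset.mem_image, Finset.mem_union, Finset.mem_product,
        Finset.mem_cons, Finset.mem_univ, and_true]
      constructor
      · rintro ⟨⟨i, ν⟩, hi, rfl⟩
        rcases hi with rfl | hi
        · exact Or.inl ⟨ν, trivial, rfl⟩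
        · exact Or.inr ⟨(i, ν), hi, rfl⟩
      · rintro (⟨ν, -, rfl⟩ | ⟨⟨i, ν⟩, hi, rfl⟩)
        · exact ⟨(a, ν), Or.inl rfl, rfl⟩
        · exact ⟨(i, ν), Or.inr hi, rfl⟩
    have hAcard : A.card = n := by
      rw [hA, Finset.card_image_of_injective _ ?_, Finset.card_univ, Fintype.card_fin]
      intro x y hxy
      exact Finsupp.single_left_injective (one_ne_zero) (add_left_cancel hxy)
    have hinter : ∀ i ∈ s',
        (A ∩ Finset.univ.image (fun ν : Fin n => μ i + Finsupp.single ν 1)).card ≤ 1 := by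
      intro i hi
      rw [Finset.card_le_one]
      intro x hx y hy
      rw [Finset.mem_inter] at hx hy
      obtain ⟨hx1, hx2⟩ := hx
      obtain ⟨hy1, hy2⟩ := hy
      rw [hA, Finset.mem_image] at hx1 hy1
      rw [Finset.mem_image] at hx2 hy2
      obtain ⟨ν1, -, hx1⟩ := hx1
      obtain ⟨ν1', -, hx2⟩ := hx2
      obtain ⟨ν2, -, hy1⟩ := hy1
      obtain ⟨ν2', -, hy2⟩ := hy2
      have hab : μ a ≠ μ i := by
        intro h
        have : a = i := hinj (Finset.mem_cons_self a s') (Finset.mem_cons.mpr (Or.inr hi)) h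
        exact ha (this ▸ hi)
      have := aux_key hab (hx1.trans hx2.symm) (hy1.trans hy2.symm)
      rw [← hx1, ← hy1, this]
    have hsub : A ∩ B' ⊆ s'.biUnion
        (fun i => A ∩ Finset.univ.image (fun ν : Fin n => μ i + Finsupp.single ν 1)) := by
      intro x hx
      rw [Finset.mem_inter] at hx
      obtain ⟨hx1, hx2⟩ := hx
      rw [hB', Finset.mem_image] at hx2
      obtain ⟨⟨i, ν⟩, hmem, rfl⟩ := hx2
      rw [Finset.mem_product] at hmem
      exact Finset.mem_biUnion.mpr ⟨i, hmem.1, Finset.mem_inter.mpr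
        ⟨hx1, Finset.mem_image.mpr ⟨ν, Finset.mem_univ ν, rfl⟩⟩⟩
    have hABle : (A ∩ B').card ≤ s'.card := by
      calc (A ∩ B').card ≤ (s'.biUnion
            (fun i => A ∩ Finset.univ.image (fun ν : Fin n => μ i + Finsupp.single ν 1))).card :=
          Finset.card_le_card hsub
        _ ≤ ∑ i ∈ s', (A ∩ Finset.univ.image
              (fun ν : Fin n => μ i + Finsupp.single ν 1)).card := Finset.card_biUnion_le
        _ ≤ ∑ _i ∈ s', 1 := Finset.sum_le_sum hinter
        _ = s'.card := by simp
    have h5 : (A ∪ B').card = (A \ B').card + B'.card := by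
      rw [← Finset.sdiff_union_self_eq_union]
      exact Finset.card_union_of_disjoint Finset.sdiff_disjoint
    have h6 := Finset.card_sdiff_add_card_inter A B'
    have ih' := ih hinj'
    rw [hunion, Finset.card_cons, Finset.sum_range_succ]
    omega

open AddMonoidAlgebra in
/-- Polynomials with pairwise distinct leading (lex) monomials are linearly independent. -/
lemma linIndep_of_supDegree {n : ℕ} {ι : Type*} {q : ι → MvPolynomial (Fin n) ℂ}
    (h0 : ∀ i, q i ≠ 0)
    (hinj : Function.Injective fun i =>
      AddMonoidAlgebra.supDegree (⇑(toLex (α := Fin n →₀ ℕ))) (q i)) :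
    LinearIndependent ℂ q := by
  classical
  rw [linearIndependent_iff']
  intro s g hsum i hi
  by_contra hgi
  have hsum' : ∑ j ∈ s.filter (fun j => g j ≠ 0), g j • q j = 0 := by
    rw [Finset.sum_filter_of_ne]
    · exact hsum
    · intro x _ h hg
      exact h (by rw [hg, zero_smul])
  have hsm : ∀ (c : ℂ) (f : MvPolynomial (Fin n) ℂ), c ≠ 0 →
      AddMonoidAlgebra.supDegree (⇑(toLex (α := Fin n →₀ ℕ))) (c • f)
        = AddMonoidAlgebra.supDegree (⇑toLex) f := by
    intro c f hc
    show ((c • f).support).sup _ = (f.support).sup _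
    rw [MvPolynomial.support_smul_eq hc]
  refine AddMonoidAlgebra.sum_ne_zero_of_injOn_supDegree'
    (D := ⇑(toLex (α := Fin n →₀ ℕ)))
    ⟨i, Finset.mem_filter.mpr ⟨hi, hgi⟩, smul_ne_zero hgi (h0 i)⟩ ?_ hsum'
  intro x hx y hy h
  rw [Finset.mem_coe, Finset.mem_filter] at hx hy
  have hxy : AddMonoidAlgebra.supDegree (⇑(toLex (α := Fin n →₀ ℕ))) (q x)
      = AddMonoidAlgebra.supDegree (⇑toLex) (q y) := by
    have h' : AddMonoidAlgebra.supDegree (⇑(toLex (α := Fin n →₀ ℕ))) (g x • q x)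
        = AddMonoidAlgebra.supDegree (⇑toLex) (g y • q y) := h
    rwa [hsm _ _ hx.2, hsm _ _ hy.2] at h'
  exact hinj hxy

open AddMonoidAlgebra in
lemma supDegree_mul_X {n : ℕ} {f : MvPolynomial (Fin n) ℂ} (hf : f ≠ 0) (ν : Fin n) :
    AddMonoidAlgebra.supDegree (⇑(toLex (α := Fin n →₀ ℕ))) (f * X ν) =
      AddMonoidAlgebra.supDegree (⇑toLex) f + toLex (Finsupp.single ν 1) := by
  have hadd : ∀ a b : Fin n →₀ ℕ, toLex (a + b) = toLex a + toLex b := fun _ _ => rfl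
  rw [AddMonoidAlgebra.supDegree_mul toLex.injective hadd
    (mul_ne_zero ((AddMonoidAlgebra.leadingCoeff_ne_zero toLex.injective).mpr hf)
      ((AddMonoidAlgebra.leadingCoeff_ne_zero toLex.injective).mpr (X_ne_zero ν)))
    hf (X_ne_zero ν)]
  congr 1
  show ((X ν : MvPolynomial (Fin n) ℂ).support).sup ⇑toLex = _
  rw [MvPolynomial.support_X]
  exact Finset.sup_singleton

open AddMonoidAlgebra in
lemma coeff_supDegree_ne_zero {n : ℕ} {f : MvPolynomial (Fin n) ℂ} (hf : f ≠ 0) :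
    MvPolynomial.coeff (ofLex (AddMonoidAlgebra.supDegree (⇑(toLex (α := Fin n →₀ ℕ))) f)) f
      ≠ 0 := by
  obtain ⟨a, ha, he⟩ :=
    AddMonoidAlgebra.exists_supDegree_mem_support (⇑(toLex (α := Fin n →₀ ℕ))) hf
  rw [he]
  simpa using MvPolynomial.mem_support_iff.mp ha

end Aux

/-- **Lemma (dim S ≤ k).** Let `p_1,...,p_m` be homogeneous polynomials of degree `d ≥ 1`
in `n ≥ 2` complex variables, linearly independent over `ℂ`.  If
`m < ∑_{j=0}^{k} (n-j)` for some `0 ≤ k ≤ n-1`, then the space `S` of homogeneous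
polynomials `r` of degree `d-1` admitting a matrix `Q` with `p(z)Q = r(z)z`
has dimension at most `k`. -/
theorem dim_S_le_k (n m d k : ℕ) (hn : 2 ≤ n) (hd : 1 ≤ d) (hk : k ≤ n - 1)
    (p : Fin m → MvPolynomial (Fin n) ℂ)
    (hhom : ∀ j, (p j).IsHomogeneous d)
    (hli : LinearIndependent ℂ p)
    (hm : m < ∑ j ∈ Finset.range (k + 1), (n - j)) :
    Module.rank ℂ
      ↥(Submodule.span ℂ {r : MvPolynomial (Fin n) ℂ |
          r.IsHomogeneous (d - 1) ∧
          ∃ Q : Matrix (Fin m) (Fin n) ℂ,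
            ∀ ν : Fin n, (∑ j, Q j ν • p j) = r * X ν}) ≤ k := by
  classical
  set P := Submodule.span ℂ (Set.range p) with hP
  set W := ⨅ ν : Fin n, P.comap (LinearMap.mulRight ℂ (X ν : MvPolynomial (Fin n) ℂ)) with hW
  have hWmem : ∀ {r : MvPolynomial (Fin n) ℂ}, r ∈ W ↔ ∀ ν, r * X ν ∈ P := by
    intro r
    simp [hW, Submodule.mem_iInf, Submodule.mem_comap, LinearMap.mulRight_apply]
  have hspan : Submodule.span ℂ {r : MvPolynomial (Fin n) ℂ |
      r.IsHomogeneous (d - 1) ∧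
      ∃ Q : Matrix (Fin m) (Fin n) ℂ, ∀ ν : Fin n, (∑ j, Q j ν • p j) = r * X ν} ≤ W := by
    rw [Submodule.span_le]
    rintro r ⟨-, Q, hQ⟩
    rw [SetLike.mem_coe, hWmem]
    intro ν
    rw [← hQ ν]
    exact Submodule.sum_mem _ fun j _ => Submodule.smul_mem _ _
      (Submodule.subset_span ⟨j, rfl⟩)
  refine le_trans (Submodule.rank_mono hspan) ?_
  by_contra hlt
  push_neg at hlt
  have hk1 : ((k + 1 : ℕ) : Cardinal) ≤ Module.rank ℂ ↥W := by
    push_cast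
    exact le_trans (Cardinal.add_one_le_succ _) (Order.succ_le_of_lt hlt)
  obtain ⟨g, hg⟩ := exists_linearIndependent_of_le_rank hk1
  set r : Fin (k + 1) → MvPolynomial (Fin n) ℂ := fun i => (g i : MvPolynomial (Fin n) ℂ)
    with hr
  have hrli : LinearIndependent ℂ r := hg.map' W.subtype (Submodule.ker_subtype W)
  have hrW : ∀ i, r i ∈ W := fun i => (g i).2
  set V := Submodule.span ℂ (Set.range r) with hV
  have hVW : V ≤ W := Submodule.span_le.mpr (Set.range_subset_iff.mpr hrW)
  set DD : Set (Lex (Fin n →₀ ℕ)) :=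
    (fun q : MvPolynomial (Fin n) ℂ =>
      AddMonoidAlgebra.supDegree (⇑(toLex (α := Fin n →₀ ℕ))) q) '' {q | q ∈ V ∧ q ≠ 0}
    with hDD
  have hcard : ((k + 1 : ℕ) : Cardinal) ≤ Cardinal.mk DD := by
    by_cases hfin : DD.Finite
    · haveI := hfin.fintype
      set Φ : ↥V →ₗ[ℂ] (DD → ℂ) :=
        LinearMap.pi (fun μ => (MvPolynomial.lcoeff ℂ (ofLex μ.1)).comp V.subtype) with hΦ
      have hΦinj : Function.Injective Φ := by
        rw [← LinearMap.ker_eq_bot, Submodule.eq_bot_iff]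
        intro v hv
        rw [LinearMap.mem_ker] at hv
        by_contra hne
        have hv1 : (v : MvPolynomial (Fin n) ℂ) ≠ 0 := by
          intro h
          exact hne (Subtype.ext h)
        have hmem : AddMonoidAlgebra.supDegree (⇑(toLex (α := Fin n →₀ ℕ)))
            (v : MvPolynomial (Fin n) ℂ) ∈ DD := ⟨(v : MvPolynomial (Fin n) ℂ), ⟨v.2, hv1⟩, rfl⟩
        have := congrFun (congrArg (fun φ => φ) hv) ⟨_, hmem⟩
        have hzero : MvPolynomial.coeff
            (ofLex (AddMonoidAlgebra.supDegree (⇑(toLex (α := Fin n →₀ ℕ)))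
              (v : MvPolynomial (Fin n) ℂ))) (v : MvPolynomial (Fin n) ℂ) = 0 := this
        exact coeff_supDegree_ne_zero hv1 hzero
      have h1 : Module.rank ℂ ↥V ≤ Module.rank ℂ (DD → ℂ) :=
        Φ.rank_le_of_injective hΦinj
      have h2 : Module.rank ℂ (DD → ℂ) = Fintype.card DD := rank_fun'
      have h3 : ((k + 1 : ℕ) : Cardinal) ≤ Module.rank ℂ ↥V := by
        set r' : Fin (k + 1) → ↥V := fun i =>
          ⟨r i, Submodule.subset_span (Set.mem_range_self i)⟩ with hr'
        have hr'li : LinearIndependent ℂ r' := LinearIndependent.of_comp V.subtype hrli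
        simpa using hr'li.cardinal_le_rank
      calc ((k + 1 : ℕ) : Cardinal) ≤ Module.rank ℂ ↥V := h3
        _ ≤ Module.rank ℂ (DD → ℂ) := h1
        _ = Fintype.card DD := h2
        _ = Cardinal.mk DD := (Cardinal.mk_fintype _).symm
    · have : Infinite DD := Set.infinite_coe_iff.mpr hfin
      exact le_trans (le_of_lt (Cardinal.nat_lt_aleph0 _)) (Cardinal.aleph0_le_mk _)
  have hemb : Nonempty (Fin (k + 1) ↪ DD) := by
    rw [← Cardinal.mk_fin (k + 1)] at hcard
    exact Cardinal.le_def _ _ |>.mp hcard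
  obtain ⟨e⟩ := hemb
  have hch : ∀ i : Fin (k + 1), ∃ q : MvPolynomial (Fin n) ℂ, (q ∈ V ∧ q ≠ 0) ∧
      AddMonoidAlgebra.supDegree (⇑(toLex (α := Fin n →₀ ℕ))) q = (e i : Lex (Fin n →₀ ℕ)) := by
    intro i
    obtain ⟨q, hq1, hq2⟩ := (e i).2
    exact ⟨q, hq1, hq2⟩
  choose f hf1 hf2 using hch
  set μ : Fin (k + 1) → (Fin n →₀ ℕ) := fun i => ofLex (e i : Lex (Fin n →₀ ℕ)) with hμ
  have hμinj : Function.Injective μ := by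
    intro i j h
    exact e.injective (Subtype.ext h)
  have hlmf : ∀ i, AddMonoidAlgebra.supDegree (⇑(toLex (α := Fin n →₀ ℕ))) (f i)
      = toLex (μ i) := by
    intro i
    rw [hf2 i, hμ]
    rfl
  set BB := ((Finset.univ : Finset (Fin (k + 1))) ×ˢ (Finset.univ : Finset (Fin n))).image
    (fun x => μ x.1 + Finsupp.single x.2 1) with hBB
  have hBBcard : ∑ j ∈ Finset.range (k + 1), (n - j) ≤ BB.card := by
    have := aux_count μ Finset.univ (hμinj.injOn)
    rw [Finset.card_univ, Fintype.card_fin] at this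
    exact this
  have hbb : ∀ b : BB, ∃ x : Fin (k + 1) × Fin n,
      μ x.1 + Finsupp.single x.2 1 = (b : Fin n →₀ ℕ) := by
    intro b
    obtain ⟨x, -, hx⟩ := Finset.mem_image.mp b.2
    exact ⟨x, hx⟩
  choose ξ hξ using hbb
  set F : BB → MvPolynomial (Fin n) ℂ := fun b => f (ξ b).1 * X (ξ b).2 with hFdef
  have hF0 : ∀ b, F b ≠ 0 := fun b => mul_ne_zero (hf1 _).2 (X_ne_zero _)
  have hFlm : ∀ b : BB, AddMonoidAlgebra.supDegree (⇑(toLex (α := Fin n →₀ ℕ))) (F b)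
      = toLex (b : Fin n →₀ ℕ) := by
    intro b
    show AddMonoidAlgebra.supDegree _ (f (ξ b).1 * X (ξ b).2) = _
    rw [supDegree_mul_X (hf1 _).2, hlmf, ← hξ b]
    rfl
  have hFinj : Function.Injective fun b =>
      AddMonoidAlgebra.supDegree (⇑(toLex (α := Fin n →₀ ℕ))) (F b) := by
    intro b c h
    simp only [hFlm] at h
    exact Subtype.ext (toLex.injective h)
  have hFli : LinearIndependent ℂ F := linIndep_of_supDegree hF0 hFinj
  have hFP : ∀ b, F b ∈ P := fun b => (hWmem.mp (hVW (hf1 (ξ b).1).1)) (ξ b).2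
  set F' : BB → ↥P := fun b => ⟨F b, hFP b⟩ with hF'
  have hF'li : LinearIndependent ℂ F' := LinearIndependent.of_comp P.subtype hFli
  have hcard2 : (BB.card : Cardinal) ≤ Module.rank ℂ ↥P := by
    simpa [Cardinal.mk_coe_finset] using hF'li.cardinal_le_rank
  have hPm : Module.rank ℂ ↥P ≤ (m : Cardinal) := by
    refine le_trans (rank_span_le _) ?_
    refine le_trans Cardinal.mk_range_le ?_
    simp
  have hBm : BB.card ≤ m := by exact_mod_cast hcard2.trans hPm
  omega
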